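/- Let ε ∈ (0,1), r ≥ 0 and t ≥ 0. Then |e^{-εr²t} cos(r√((1-ε²)r²+1) t) - cos(r√(r²+1) t)| ≤ C(ε² r³ t/√(r²+1) + ε r² t) for an absolute constant C > 0. -/
import Mathlib

open Real

lemma cos_lip (x y : ℝ) : |Real.cos x - Real.cos y| ≤ |x - y| := by
  rw [Real.cos_sub_cos]
  have h1 : |Real.sin ((x + y) / 2)| ≤ 1 := Real.abs_sin_le_one _
  have h2 : |Real.sin ((x - y) / 2)| ≤ |(x - y) / 2| := Real.abs_sin_le_abs
  calc |-2 * Real.sin ((x + y) / 2) * Real.sin ((x - y) / 2)|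
      = 2 * |Real.sin ((x + y) / 2)| * |Real.sin ((x - y) / 2)| := by
        rw [abs_mul, abs_mul]; norm_num
    _ ≤ 2 * 1 * |(x - y) / 2| := by
        apply mul_le_mul _ h2 (abs_nonneg _) (by positivity)
        exact mul_le_mul_of_nonneg_left h1 (by norm_num)
    _ = |x - y| := by rw [abs_div, abs_two]; ring

theorem stmt_16 :
    ∃ C > 0, ∀ ε r t : ℝ, 0 < ε → ε < 1 → 0 ≤ r → 0 ≤ t →
      |Real.exp (-ε * r ^ 2 * t) * Real.cos (r * Real.sqrt ((1 - ε ^ 2) * r ^ 2 + 1) * t)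
          - Real.cos (r * Real.sqrt (r ^ 2 + 1) * t)|
        ≤ C * (ε ^ 2 * r ^ 3 * t / Real.sqrt (r ^ 2 + 1) + ε * r ^ 2 * t) := by
  refine ⟨1, one_pos, fun ε r t hε hε1 hr ht => ?_⟩
  set A := Real.sqrt ((1 - ε ^ 2) * r ^ 2 + 1) with hA
  set B := Real.sqrt (r ^ 2 + 1) with hB
  have hBpos : 0 < B := Real.sqrt_pos.2 (by positivity)
  have hε2 : ε ^ 2 ≤ 1 := by nlinarith
  have hArg : 0 ≤ (1 - ε ^ 2) * r ^ 2 + 1 := by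
    have := mul_nonneg (by linarith : (0:ℝ) ≤ 1 - ε ^ 2) (sq_nonneg r); linarith
  have hAnn : 0 ≤ A := Real.sqrt_nonneg _
  have hAB : A ≤ B := Real.sqrt_le_sqrt (by nlinarith [sq_nonneg r])
  have hAsq : A ^ 2 = (1 - ε ^ 2) * r ^ 2 + 1 := Real.sq_sqrt hArg
  have hBsq : B ^ 2 = r ^ 2 + 1 := Real.sq_sqrt (by positivity)
  -- bound on B - A
  have hdiff : B - A ≤ ε ^ 2 * r ^ 2 / B := by
    rw [le_div_iff₀ hBpos]
    nlinarith [mul_nonneg (sub_nonneg.2 hAB) hAnn]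
  have hdiff0 : 0 ≤ B - A := sub_nonneg.2 hAB
  -- exponential bound
  have hexp1 : Real.exp (-ε * r ^ 2 * t) ≤ 1 := by
    apply Real.exp_le_one_iff.2
    nlinarith [mul_nonneg (mul_nonneg hε.le (sq_nonneg r)) ht]
  have hexp2 : 1 - ε * r ^ 2 * t ≤ Real.exp (-ε * r ^ 2 * t) := by
    have := Real.add_one_le_exp (-ε * r ^ 2 * t)
    linarith
  have hexpb : |Real.exp (-ε * r ^ 2 * t) - 1| ≤ ε * r ^ 2 * t := by
    rw [abs_le]
    have h0 : 0 ≤ ε * r ^ 2 * t := mul_nonneg (mul_nonneg hε.le (sq_nonneg r)) ht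
    constructor <;> nlinarith
  have hcos1 : |Real.cos (r * A * t)| ≤ 1 := Real.abs_cos_le_one _
  have hcosb : |Real.cos (r * A * t) - Real.cos (r * B * t)| ≤ ε ^ 2 * r ^ 3 * t / B := by
    refine le_trans (cos_lip _ _) ?_
    have : |r * A * t - r * B * t| = r * t * (B - A) := by
      rw [abs_of_nonpos (by nlinarith [mul_nonneg (mul_nonneg hr ht) (sub_nonneg.2 hAB)])]; ring
    rw [this]
    calc r * t * (B - A) ≤ r * t * (ε ^ 2 * r ^ 2 / B) := by
          apply mul_le_mul_of_nonneg_left hdiff (by positivity)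
      _ = ε ^ 2 * r ^ 3 * t / B := by ring
  calc |Real.exp (-ε * r ^ 2 * t) * Real.cos (r * A * t) - Real.cos (r * B * t)|
      ≤ |(Real.exp (-ε * r ^ 2 * t) - 1) * Real.cos (r * A * t)|
        + |Real.cos (r * A * t) - Real.cos (r * B * t)| := by
        have : Real.exp (-ε * r ^ 2 * t) * Real.cos (r * A * t) - Real.cos (r * B * t)
            = (Real.exp (-ε * r ^ 2 * t) - 1) * Real.cos (r * A * t)
              + (Real.cos (r * A * t) - Real.cos (r * B * t)) := by ring
        rw [this]; exact abs_add_le _ _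
    _ ≤ ε * r ^ 2 * t + ε ^ 2 * r ^ 3 * t / B := by
        gcongr
        rw [abs_mul]
        calc |Real.exp (-ε * r ^ 2 * t) - 1| * |Real.cos (r * A * t)|
            ≤ (ε * r ^ 2 * t) * 1 := by
              apply mul_le_mul hexpb hcos1 (abs_nonneg _) (by positivity)
          _ = ε * r ^ 2 * t := by ring
    _ = 1 * (ε ^ 2 * r ^ 3 * t / B + ε * r ^ 2 * t) := by ring
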